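/- Let κ be a field and let M be a finitely generated ℤ-graded κ[v]-module. If dim_κ M/vM = dim_κ M/(v−1)M, then M is a free κ[v]-module. (Geometrically: a G_m-equivariant coherent sheaf on the affine line over κ whose fibers at the origin and at a nonzero point have the same dimension is a vector bundle.) -/

import Mathlib

set_option linter.unusedSectionVars false

open Polynomial Module Submodule


section KeyA
variable {κ : Type*} [Field κ] {M : Type*} [AddCommGroup M] [Module κ M]
  [Module (Polynomial κ) M] [IsScalarTower κ (Polynomial κ) M]
  (ℱ : ℤ → Submodule κ M)

theorem pow_smul_mem (hdeg : ∀ i : ℤ, ∀ x ∈ ℱ i, (Polynomial.X : Polynomial κ) • x ∈ ℱ (i - 1))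
    (j : ℕ) (i : ℤ) (y : M) (hy : y ∈ ℱ i) :
    (X : Polynomial κ) ^ j • y ∈ ℱ (i - j) := by
  induction j with
  | zero => simpa using hy
  | succ n ih =>
    have := hdeg _ _ ih
    rw [smul_smul, ← pow_succ'] at this
    convert this using 2
    push_cast
    ring

theorem keyA (hint : DirectSum.IsInternal ℱ)
    (hdeg : ∀ i : ℤ, ∀ x ∈ ℱ i, (Polynomial.X : Polynomial κ) • x ∈ ℱ (i - 1))
    (q : Polynomial κ) (hq : q.coeff 0 ≠ 0) (x : M) (hx : q • x = 0) : x = 0 := by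
  classical
  letI : DirectSum.Decomposition ℱ := hint.chooseDecomposition
  by_contra hx0
  have hexp : ∀ y : M, q • y = ∑ j ∈ q.support, q.coeff j • ((X : Polynomial κ) ^ j • y) := by
    intro y
    conv_lhs => rw [← Polynomial.sum_C_mul_X_pow_eq q]
    rw [Polynomial.sum, Finset.sum_smul]
    refine Finset.sum_congr rfl fun j _ => ?_
    rw [mul_smul, ← Polynomial.algebraMap_eq, algebraMap_smul]
  -- component computation
  have hcomp : ∀ (i : ℤ) (y : M), y ∈ ℱ i → ∀ n : ℤ, i ≤ n →
      ((DirectSum.decompose ℱ (q • y)) n : M) = (if i = n then q.coeff 0 • y else 0) := by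
    intro i y hy n hin
    rw [hexp y, DirectSum.decompose_sum]
    have hterm : ∀ j ∈ q.support, DirectSum.decompose ℱ (q.coeff j • ((X : Polynomial κ) ^ j • y))
        = DirectSum.of (fun i => ℱ i) (i - j)
          ⟨q.coeff j • ((X : Polynomial κ) ^ j • y),
            Submodule.smul_mem _ _ (pow_smul_mem ℱ hdeg j i y hy)⟩ := fun j _ =>
      DirectSum.decompose_of_mem ℱ _
    rw [Finset.sum_congr rfl hterm, DFinsupp.finset_sum_apply, AddSubmonoidClass.coe_finset_sum]
    by_cases hin' : i = n
    · subst hin'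
      rw [if_pos rfl, Finset.sum_eq_single_of_mem 0 (Polynomial.mem_support_iff.mpr hq)]
      · rw [DirectSum.coe_of_apply, if_pos (by omega)]
        simp
      · intro j _ hj0
        rw [DirectSum.coe_of_apply, if_neg (by omega)]
        simp
    · rw [if_neg hin', Finset.sum_eq_zero]
      intro j hj
      rw [DirectSum.coe_of_apply, if_neg (by omega)]
      simp
  -- support and top degree
  set s := (DirectSum.decompose ℱ x).support with hs
  have hne : s.Nonempty := by
    rw [hs, Finset.nonempty_iff_ne_empty, Ne, DFinsupp.support_eq_empty]
    intro h
    apply hx0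
    have := congrArg (DirectSum.decompose ℱ).symm h
    simpa using this
  set n := s.max' hne with hn
  have hxsum : x = ∑ i ∈ s, ((DirectSum.decompose ℱ x) i : M) :=
    (DirectSum.sum_support_decompose ℱ x).symm
  have h0 : ((DirectSum.decompose ℱ (q • x)) n : M) = 0 := by
    rw [hx]
    simp
  have hsum : ((DirectSum.decompose ℱ (q • x)) n : M)
      = ∑ i ∈ s, ((DirectSum.decompose ℱ (q • ((DirectSum.decompose ℱ x) i : M))) n : M) := by
    conv_lhs => rw [hxsum]
    rw [Finset.smul_sum, DirectSum.decompose_sum, DFinsupp.finset_sum_apply]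
    push_cast
    rfl
  have hfin : ((DirectSum.decompose ℱ (q • x)) n : M) = q.coeff 0 • ((DirectSum.decompose ℱ x) n : M) := by
    rw [hsum, Finset.sum_eq_single_of_mem n (s.max'_mem hne)]
    · rw [hcomp n _ (SetLike.coe_mem _) n le_rfl, if_pos rfl]
    · intro i hi hine
      rw [hcomp i _ (SetLike.coe_mem _) n (s.le_max' i hi), if_neg hine]
  have hzn : ((DirectSum.decompose ℱ x) n : M) = 0 := by
    have := hfin.symm.trans h0
    rcases smul_eq_zero.mp this with h | h
    · exact absurd h hq
    · exact h
  exact DFinsupp.mem_support_iff.mp (s.max'_mem hne)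
    (Subtype.coe_injective (by simpa using hzn))
end KeyA



section Main
variable {κ : Type*} [Field κ] {M : Type*} [AddCommGroup M] [Module κ M]
  [Module (Polynomial κ) M] [IsScalarTower κ (Polynomial κ) M]

/-- torsion elements are X-power torsion, given the killer property. -/
theorem torsX (hkill : ∀ q : Polynomial κ, q.coeff 0 ≠ 0 → ∀ x : M, q • x = 0 → x = 0)
    (x : M) (hx : x ∈ Submodule.torsion (Polynomial κ) M) :
    ∃ m : ℕ, (X : Polynomial κ) ^ m • x = 0 := by
  obtain ⟨⟨p, hp⟩, hpx⟩ := hx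
  have hp0 : p ≠ 0 := nonZeroDivisors.ne_zero hp
  suffices H : ∀ (N : ℕ) (p : Polynomial κ), p ≠ 0 → p.natDegree ≤ N → ∀ y : M, p • y = 0 →
      ∃ m : ℕ, (X : Polynomial κ) ^ m • y = 0 from H p.natDegree p hp0 le_rfl x hpx
  intro N
  induction N with
  | zero =>
    intro p hp0 hdeg y hy
    refine ⟨0, ?_⟩
    rw [pow_zero, one_smul]
    refine hkill p ?_ y hy
    intro h0
    obtain ⟨p', rfl⟩ := Polynomial.X_dvd_iff.mpr h0
    have hp' : p' ≠ 0 := by rintro rfl; simp at hp0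
    have := Polynomial.natDegree_mul (Polynomial.X_ne_zero (R := κ)) hp'
    rw [Polynomial.natDegree_X] at this
    omega
  | succ N ih =>
    intro p hp0 hdeg y hy
    by_cases h0 : p.coeff 0 = 0
    · obtain ⟨p', rfl⟩ := Polynomial.X_dvd_iff.mpr h0
      have hp' : p' ≠ 0 := by rintro rfl; simp at hp0
      have hnd := Polynomial.natDegree_mul (Polynomial.X_ne_zero (R := κ)) hp'
      rw [Polynomial.natDegree_X] at hnd
      have hy' : p' • ((X : Polynomial κ) • y) = 0 := by
        rw [← mul_smul, mul_comm, hy]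
      obtain ⟨m, hm⟩ := ih p' hp' (by omega) _ hy'
      exact ⟨m + 1, by rwa [pow_succ, mul_smul]⟩
    · exact ⟨0, by rw [pow_zero, one_smul]; exact hkill p h0 y hy⟩

/-- quotients by submodules containing (X - C c) • ⊤ are finite dimensional over κ. -/
theorem finquot [Module.Finite (Polynomial κ) M] (c : κ) (S : Submodule (Polynomial κ) M)
    (hS : Ideal.span {(X : Polynomial κ) - C c} • (⊤ : Submodule (Polynomial κ) M) ≤ S) :
    FiniteDimensional κ (M ⧸ S) := by
  have hXc : ∀ n : M ⧸ S, ((X : Polynomial κ) - C c) • n = 0 := by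
    intro n
    obtain ⟨m, rfl⟩ := Submodule.Quotient.mk_surjective S n
    rw [← Submodule.Quotient.mk_smul, Submodule.Quotient.mk_eq_zero]
    exact hS (Submodule.smul_mem_smul (Ideal.mem_span_singleton_self _) Submodule.mem_top)
  have hact : ∀ (r : Polynomial κ) (n : M ⧸ S), r • n = r.eval c • n := by
    intro r n
    obtain ⟨u, hu⟩ := Polynomial.X_sub_C_dvd_sub_C_eval (a := c) (p := r)
    have h1 : r • n - r.eval c • n = (((X : Polynomial κ) - C c) * u) • n := by
      rw [← algebraMap_smul (Polynomial κ) (r.eval c) n, ← sub_smul, Polynomial.algebraMap_eq, ← hu]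
    rw [mul_comm, mul_smul, hXc, smul_zero] at h1
    exact sub_eq_zero.mp h1
  obtain ⟨t, ht⟩ := Module.Finite.fg_top (R := Polynomial κ) (M := M ⧸ S)
  have hspan : Submodule.span κ (↑t : Set (M ⧸ S)) = ⊤ := by
    rw [eq_top_iff]
    rintro n -
    have hn : n ∈ Submodule.span (Polynomial κ) (↑t : Set (M ⧸ S)) := by rw [ht]; trivial
    induction hn using Submodule.span_induction with
    | mem y hy => exact Submodule.subset_span hy
    | zero => exact zero_mem _
    | add y z _ _ hy hz => exact add_mem hy hz
    | smul r y _ hy => rw [hact r y]; exact Submodule.smul_mem _ _ hy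
  exact ⟨⟨t, hspan⟩⟩
end Main



theorem freeDim {κ : Type*} [Field κ] (F : Type*) [AddCommGroup F] [Module κ F]
    [Module (Polynomial κ) F] [IsScalarTower κ (Polynomial κ) F]
    [Module.Finite (Polynomial κ) F] [Module.Free (Polynomial κ) F] (c : κ) :
    Module.finrank κ
        (F ⧸ (Ideal.span {(X : Polynomial κ) - C c} • (⊤ : Submodule (Polynomial κ) F)))
      = Fintype.card (Module.Free.ChooseBasisIndex (Polynomial κ) F) := by
  classical
  set f : Polynomial κ := X - C c with hf
  let ι := Module.Free.ChooseBasisIndex (Polynomial κ) F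
  let B : Basis ι (Polynomial κ) F := Module.Free.chooseBasis (Polynomial κ) F
  let φ : F →ₗ[κ] (ι → κ) := LinearMap.pi fun i =>
    (Polynomial.aeval c).toLinearMap.comp ((B.coord i).restrictScalars κ)
  have hφ : ∀ (x : F) (i : ι), φ x i = Polynomial.aeval c (B.repr x i) := by
    intro x i
    simp [φ, Basis.coord]
  have hsurj : Function.Surjective φ := by
    intro g
    refine ⟨B.equivFun.symm (fun i => Polynomial.C (g i)), ?_⟩
    ext i
    rw [hφ]
    rw [Basis.equivFun_symm_apply] at *
    simp [Finsupp.single_apply, apply_ite (eval c)]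
  have hker : LinearMap.ker φ =
      (Ideal.span {f} • (⊤ : Submodule (Polynomial κ) F)).restrictScalars κ := by
    ext x
    simp only [LinearMap.mem_ker, Submodule.restrictScalars_mem]
    constructor
    · intro hx
      have hdvd : ∀ i, f ∣ B.repr x i := by
        intro i
        have h0 : Polynomial.aeval c (B.repr x i) = 0 := by rw [← hφ, hx]; rfl
        rw [hf, Polynomial.dvd_iff_isRoot]
        simpa [Polynomial.IsRoot, Polynomial.aeval_def, Polynomial.eval₂_eq_eval_map] using h0
      choose u hu using hdvd
      have hx' : x = f • B.equivFun.symm u := by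
        apply B.equivFun.injective
        rw [map_smul]
        ext i
        rw [LinearEquiv.apply_symm_apply]
        have : B.equivFun x i = B.repr x i := rfl
        rw [Pi.smul_apply, this, hu i, smul_eq_mul]
      rw [hx']
      exact Submodule.smul_mem_smul (Ideal.mem_span_singleton_self _) Submodule.mem_top
    · intro hx
      refine Submodule.smul_induction_on hx ?_ ?_
      · intro r hr y _
        obtain ⟨d, rfl⟩ := Ideal.mem_span_singleton.mp hr
        ext i
        rw [hφ, map_smul]
        simp [hf]
      · intro y z hy hz
        rw [map_add, hy, hz, add_zero]
  have e3 : (F ⧸ (Ideal.span {f} • (⊤ : Submodule (Polynomial κ) F)).restrictScalars κ)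
      ≃ₗ[κ] (ι → κ) :=
    (Submodule.quotEquivOfEq _ _ hker.symm).trans (LinearMap.quotKerEquivOfSurjective φ hsurj)
  have e1 := Submodule.Quotient.restrictScalarsEquiv κ
    (Ideal.span {f} • (⊤ : Submodule (Polynomial κ) F))
  rw [← LinearEquiv.finrank_eq e1, LinearEquiv.finrank_eq e3,
    Module.finrank_fintype_fun_eq_card]



section Main
variable {κ : Type*} [Field κ] {M : Type*} [AddCommGroup M] [Module κ M]
  [Module (Polynomial κ) M] [IsScalarTower κ (Polynomial κ) M]

theorem span_smul_top_eq_range (f : Polynomial κ) :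
    Ideal.span {f} • (⊤ : Submodule (Polynomial κ) M)
      = LinearMap.range (LinearMap.lsmul (Polynomial κ) M f) := by
  apply le_antisymm
  · rw [Submodule.smul_le]
    intro r hr n _
    obtain ⟨d, rfl⟩ := Ideal.mem_span_singleton.mp hr
    exact ⟨d • n, by rw [LinearMap.lsmul_apply, smul_smul]⟩
  · rintro _ ⟨y, rfl⟩
    exact Submodule.smul_mem_smul (Ideal.mem_span_singleton_self f) trivial

theorem quot_lt (A B : Submodule (Polynomial κ) M) (hAB : A ≤ B) (hne : ¬ B ≤ A)
    [FiniteDimensional κ (M ⧸ A)] :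
    Module.finrank κ (M ⧸ B) < Module.finrank κ (M ⧸ A) := by
  set Q : Submodule (Polynomial κ) (M ⧸ A) := B.map A.mkQ with hQ
  have e : ((M ⧸ A) ⧸ Q.restrictScalars κ) ≃ₗ[κ] M ⧸ B :=
    (Submodule.Quotient.restrictScalarsEquiv κ Q).trans
      ((Submodule.quotientQuotientEquivQuotient A B hAB).restrictScalars κ)
  have hrank := Submodule.finrank_quotient_add_finrank (Q.restrictScalars κ)
  have hQpos : 0 < Module.finrank κ (Q.restrictScalars κ) := by
    obtain ⟨b, hbB, hbA⟩ := SetLike.not_le_iff_exists.mp hne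
    have hmem : A.mkQ b ∈ Q := Submodule.mem_map_of_mem hbB
    have hb0 : A.mkQ b ≠ 0 := by
      rwa [Submodule.mkQ_apply, Ne, Submodule.Quotient.mk_eq_zero]
    rw [Module.finrank_pos_iff]
    exact ⟨⟨A.mkQ b, hmem⟩, 0, by simpa [Subtype.ext_iff] using hb0⟩
  rw [← LinearEquiv.finrank_eq e]
  omega
end Main

section FF
open Polynomial Module Submodule
variable {κ : Type*} [Field κ] {M : Type*} [AddCommGroup M] [Module κ M]
  [Module (Polynomial κ) M] [IsScalarTower κ (Polynomial κ) M]

theorem main_aux [Module.Finite (Polynomial κ) M]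
    (hkill : ∀ q : Polynomial κ, q.coeff 0 ≠ 0 → ∀ x : M, q • x = 0 → x = 0)
    (hdim : Module.finrank κ
        (M ⧸ (Ideal.span {(Polynomial.X : Polynomial κ)} •
          (⊤ : Submodule (Polynomial κ) M))) =
      Module.finrank κ
        (M ⧸ (Ideal.span {(Polynomial.X : Polynomial κ) - 1} •
          (⊤ : Submodule (Polynomial κ) M)))) :
    Submodule.torsion (Polynomial κ) M = ⊥ := by
  classical
  by_contra hTne
  have hX0 : (X : Polynomial κ) = X - C (0 : κ) := by rw [map_zero, sub_zero]
  have hX1 : (X : Polynomial κ) - 1 = X - C (1 : κ) := by rw [map_one]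
  haveI : IsNoetherian (Polynomial κ) M := isNoetherian_of_isNoetherianRing_of_finite _ _
  obtain ⟨s, hs⟩ := IsNoetherian.noetherian (Submodule.torsion (Polynomial κ) M)
  have hchoice : ∀ x : M, ∃ m : ℕ,
      x ∈ Submodule.torsion (Polynomial κ) M → (X : Polynomial κ) ^ m • x = 0 := by
    intro x
    by_cases hx : x ∈ Submodule.torsion (Polynomial κ) M
    · obtain ⟨m, hm⟩ := torsX hkill x hx
      exact ⟨m, fun _ => hm⟩
    · exact ⟨0, fun h => absurd h hx⟩
  choose Nf hNf using hchoice
  set N := s.sup Nf with hN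
  have hkillN : ∀ t ∈ Submodule.torsion (Polynomial κ) M, (X : Polynomial κ) ^ N • t = 0 := by
    intro t ht
    have hle : Submodule.torsion (Polynomial κ) M
        ≤ LinearMap.ker (LinearMap.lsmul (Polynomial κ) M ((X : Polynomial κ) ^ N)) := by
      rw [← hs, Submodule.span_le]
      intro g hg
      simp only [SetLike.mem_coe, LinearMap.mem_ker, LinearMap.lsmul_apply]
      have h1 : (X : Polynomial κ) ^ (Nf g) • g = 0 :=
        hNf g (hs ▸ Submodule.subset_span hg)
      have h2 : N = (N - Nf g) + Nf g := by
        have := Finset.le_sup (f := Nf) hg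
        omega
      rw [h2, pow_add, mul_smul, h1, smul_zero]
    simpa using hle ht
  -- T ≤ (X - 1) • M
  have hT1 : Submodule.torsion (Polynomial κ) M
      ≤ Ideal.span {(X : Polynomial κ) - 1} • (⊤ : Submodule (Polynomial κ) M) := by
    intro t ht
    obtain ⟨m, hm⟩ := torsX hkill t ht
    have hmul : ((X : Polynomial κ) - 1) * (-(∑ i ∈ Finset.range m, (X : Polynomial κ) ^ i))
        = 1 - (X : Polynomial κ) ^ m := by
      rw [mul_neg, mul_comm, geom_sum_mul]; ring
    have hsm : ((X : Polynomial κ) - 1)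
        • ((-(∑ i ∈ Finset.range m, (X : Polynomial κ) ^ i)) • t) = t := by
      rw [smul_smul, hmul, sub_smul, one_smul, hm, sub_zero]
    rw [← hsm]
    exact Submodule.smul_mem_smul (Ideal.mem_span_singleton_self _) trivial
  -- T not contained in X • M
  have hTX : ¬ Submodule.torsion (Polynomial κ) M
      ≤ Ideal.span {(X : Polynomial κ)} • (⊤ : Submodule (Polynomial κ) M) := by
    intro hle
    apply hTne
    have hstep : ∀ t ∈ Submodule.torsion (Polynomial κ) M,
        ∃ u ∈ Submodule.torsion (Polynomial κ) M, t = (X : Polynomial κ) • u := by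
      intro t ht
      have h1 := hle ht
      rw [span_smul_top_eq_range] at h1
      obtain ⟨u, hu⟩ := h1
      rw [LinearMap.lsmul_apply] at hu
      refine ⟨u, ?_, hu.symm⟩
      refine (Submodule.mem_torsion_iff u).mpr
        ⟨⟨(X : Polynomial κ) ^ (N + 1),
          mem_nonZeroDivisors_of_ne_zero (pow_ne_zero _ Polynomial.X_ne_zero)⟩, ?_⟩
      show (X : Polynomial κ) ^ (N + 1) • u = 0
      rw [pow_succ, mul_smul, hu]
      exact hkillN t ht
    have hiter : ∀ k : ℕ, ∀ t ∈ Submodule.torsion (Polynomial κ) M,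
        ∃ u ∈ Submodule.torsion (Polynomial κ) M, t = (X : Polynomial κ) ^ k • u := by
      intro k
      induction k with
      | zero => exact fun t ht => ⟨t, ht, by rw [pow_zero, one_smul]⟩
      | succ n ih =>
        intro t ht
        obtain ⟨u, hu, rfl⟩ := hstep t ht
        obtain ⟨w, hw, rfl⟩ := ih u hu
        exact ⟨w, hw, by rw [← mul_smul, ← pow_succ']⟩
    rw [eq_bot_iff]
    intro t ht
    obtain ⟨u, hu, rfl⟩ := hiter N t ht
    rw [Submodule.mem_bot]
    exact hkillN u hu
  -- finite dimensionality of M ⧸ X M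
  haveI hfd : FiniteDimensional κ
      (M ⧸ (Ideal.span {(X : Polynomial κ)} • (⊤ : Submodule (Polynomial κ) M))) :=
    finquot 0 _ (le_of_eq (by rw [← hX0]))
  -- pushing quotients down to F := M ⧸ T
  have hmap : ∀ f : Polynomial κ,
      ((Submodule.torsion (Polynomial κ) M)
          ⊔ Ideal.span {f} • (⊤ : Submodule (Polynomial κ) M)).map
          (Submodule.torsion (Polynomial κ) M).mkQ
        = Ideal.span {f}
            • (⊤ : Submodule (Polynomial κ) (M ⧸ Submodule.torsion (Polynomial κ) M)) := by
    intro f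
    rw [Submodule.map_sup, Submodule.mkQ_map_self, Submodule.map_smul'', Submodule.map_top,
      Submodule.range_mkQ, bot_sup_eq]
  have hequiv : ∀ f : Polynomial κ,
      Module.finrank κ (M ⧸ ((Submodule.torsion (Polynomial κ) M)
          ⊔ Ideal.span {f} • (⊤ : Submodule (Polynomial κ) M)))
        = Module.finrank κ ((M ⧸ Submodule.torsion (Polynomial κ) M)
            ⧸ (Ideal.span {f}
              • (⊤ : Submodule (Polynomial κ) (M ⧸ Submodule.torsion (Polynomial κ) M)))) := by
    intro f
    have e1 := (Submodule.quotientQuotientEquivQuotient (Submodule.torsion (Polynomial κ) M)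
      ((Submodule.torsion (Polynomial κ) M)
        ⊔ Ideal.span {f} • (⊤ : Submodule (Polynomial κ) M)) le_sup_left).restrictScalars κ
    have e2 := (Submodule.quotEquivOfEq _ _ (hmap f)).restrictScalars κ
    rw [← LinearEquiv.finrank_eq e1, LinearEquiv.finrank_eq e2]
  -- the free quotient
  haveI : Module.Free (Polynomial κ) (M ⧸ Submodule.torsion (Polynomial κ) M) :=
    Module.free_of_finite_type_torsion_free'
  have hfree0 := freeDim (M ⧸ Submodule.torsion (Polynomial κ) M) (0 : κ)
  have hfree1 := freeDim (M ⧸ Submodule.torsion (Polynomial κ) M) (1 : κ)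
  rw [← hX0] at hfree0
  rw [← hX1] at hfree1
  -- strict inequality
  have hlt : Module.finrank κ (M ⧸ ((Submodule.torsion (Polynomial κ) M)
        ⊔ Ideal.span {(X : Polynomial κ)} • (⊤ : Submodule (Polynomial κ) M)))
      < Module.finrank κ
        (M ⧸ (Ideal.span {(X : Polynomial κ)} • (⊤ : Submodule (Polynomial κ) M))) :=
    quot_lt _ _ le_sup_right (fun h => hTX (le_trans le_sup_left h))
  -- the equal chain
  have heq1 : ((Submodule.torsion (Polynomial κ) M)
      ⊔ Ideal.span {(X : Polynomial κ) - 1} • (⊤ : Submodule (Polynomial κ) M))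
      = Ideal.span {(X : Polynomial κ) - 1} • (⊤ : Submodule (Polynomial κ) M) :=
    sup_eq_right.mpr hT1
  have e3 := (Submodule.quotEquivOfEq _ _ heq1.symm).restrictScalars κ
  have hchain := hdim.trans (LinearEquiv.finrank_eq e3)
  rw [hequiv ((X : Polynomial κ) - 1), hfree1, ← hfree0, ← hequiv (X : Polynomial κ)] at hchain
  exact absurd (hchain ▸ hlt) (lt_irrefl _)

end FF

/-- Let `κ` be a field and `M` a finitely generated ℤ-graded
`κ[v]`-module (with `v` of degree `−1`). If `dim_κ M/vM = dim_κ M/(v−1)M`, then `M`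
is a free `κ[v]`-module. -/
theorem stmt_11 (κ : Type*) [Field κ] (M : Type*) [AddCommGroup M] [Module κ M]
    [Module (Polynomial κ) M] [IsScalarTower κ (Polynomial κ) M]
    [Module.Finite (Polynomial κ) M]
    (ℱ : ℤ → Submodule κ M) (hint : DirectSum.IsInternal ℱ)
    (hdeg : ∀ i : ℤ, ∀ x ∈ ℱ i, (Polynomial.X : Polynomial κ) • x ∈ ℱ (i - 1))
    (hdim : Module.finrank κ
        (M ⧸ (Ideal.span {(Polynomial.X : Polynomial κ)} •
          (⊤ : Submodule (Polynomial κ) M))) =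
      Module.finrank κ
        (M ⧸ (Ideal.span {(Polynomial.X : Polynomial κ) - 1} •
          (⊤ : Submodule (Polynomial κ) M)))) :
    Module.Free (Polynomial κ) M := by
  have hkill : ∀ q : Polynomial κ, q.coeff 0 ≠ 0 → ∀ x : M, q • x = 0 → x = 0 :=
    keyA ℱ hint hdeg
  have hbot := main_aux hkill hdim
  haveI : IsTorsionFree (Polynomial κ) M :=
    Submodule.isTorsionFree_iff_torsion_eq_bot.mpr hbot
  exact Module.free_of_finite_type_torsion_free'
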